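/- Let C and D be categories, A and B objects of C, and let L ⊆ (A ⟶ B) be a regular language of arrows in C. Let F : D ⥤ C be any functor and let R, S be objects of D with identifications F.obj R = A and F.obj S = B. Then the language { α : R ⟶ S | F.map α ∈ L (modulo the identifications) } ⊆ (R ⟶ S) is a regular language of arrows in D. -/

import Mathlib

open CategoryTheory

universe vq uq vc uc v₁ u₁ v₂ u₂ v₃ u₃ v u v' u'

/-- A functor `p : D ⥤ C` has the unique lifting of factorizations property (is ULF) if
every factorization of the image of a morphism lifts uniquely. -/
def IsULF {D : Type u} {C : Type u'} [Category.{v} D] [Category.{v'} C] (p : D ⥤ C) : Prop :=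
  ∀ ⦃X Y : D⦄ (α : X ⟶ Y) ⦃B : C⦄ (u : p.obj X ⟶ B) (v : B ⟶ p.obj Y),
    p.map α = u ≫ v →
    ∃! t : Σ (Z : D), (X ⟶ Z) × (Z ⟶ Y),
      ∃ e : p.obj t.1 = B,
        t.2.1 ≫ t.2.2 = α ∧ p.map t.2.1 ≫ eqToHom e = u ∧ p.map t.2.2 = eqToHom e ≫ v

/-- A functor `p : D ⥤ C` is finitary if its fibers over objects and over morphisms
are all finite. -/
def IsFinitary {D : Type u} {C : Type u'} [Category.{v} D] [Category.{v'} C]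
    (p : D ⥤ C) : Prop :=
  (∀ A : C, { X : D | p.obj X = A }.Finite) ∧
    ∀ (A B : C) (w : A ⟶ B),
      { t : Σ (X : D) (Y : D), X ⟶ Y |
        ∃ (hX : p.obj t.1 = A) (hY : p.obj t.2.1 = B),
          p.map t.2.2 = eqToHom hX ≫ w ≫ eqToHom hY.symm }.Finite

/-- A language of arrows `L ⊆ C(A,B)` is regular if it is the language recognized by a
nondeterministic finite-state automaton over `C`, i.e. a finitary ULF functor `p : Q ⥤ C`
with chosen initial and accepting states lying over `A` and `B`. -/
def IsRegularLang.{w₁, w₂, w₃, w₄} {C : Type w₄} [Category.{w₃} C] {A B : C}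
    (L : Set (A ⟶ B)) : Prop :=
  ∃ (Q : Type w₂) (_ : Category.{w₁} Q) (p : Q ⥤ C) (q₀ qf : Q)
    (h₀ : p.obj q₀ = A) (hf : p.obj qf = B),
    IsULF p ∧ IsFinitary p ∧
    L = { w : A ⟶ B | ∃ α : q₀ ⟶ qf, p.map α = eqToHom h₀ ≫ w ≫ eqToHom hf.symm }

section PB

variable {D : Type u} {C : Type u'} {Q : Type u₃}
  [Category.{v} D] [Category.{v'} C] [Category.{v₃} Q]
  (F : D ⥤ C) (p : Q ⥤ C)

/-- The strict pullback of a functor `p : Q ⥤ C` along a functor `F : D ⥤ C`. -/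
structure CatPB : Type (max u u₃) where
  d : D
  q : Q
  h : F.obj d = p.obj q

namespace CatPB

variable {F p}

lemma obj_ext {X Y : CatPB F p} (hd : X.d = Y.d) (hq : X.q = Y.q) : X = Y := by
  cases X; cases Y; cases hd; cases hq; rfl

instance : Category.{max v v₃} (CatPB F p) where
  Hom X Y := { fg : (X.d ⟶ Y.d) × (X.q ⟶ Y.q) //
    F.map fg.1 = eqToHom X.h ≫ p.map fg.2 ≫ eqToHom Y.h.symm }
  id X := ⟨(𝟙 _, 𝟙 _), by simp⟩
  comp f g := ⟨(f.1.1 ≫ g.1.1, f.1.2 ≫ g.1.2), by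
    simp [f.2, g.2]⟩

lemma hom_ext {X Y : CatPB F p} {f g : X ⟶ Y} (h1 : f.1.1 = g.1.1) (h2 : f.1.2 = g.1.2) :
    f = g := Subtype.ext (Prod.ext h1 h2)

@[simp] lemma comp_val_fst {X Y Z : CatPB F p} (f : X ⟶ Y) (g : Y ⟶ Z) :
    (f ≫ g).1.1 = f.1.1 ≫ g.1.1 := rfl

@[simp] lemma comp_val_snd {X Y Z : CatPB F p} (f : X ⟶ Y) (g : Y ⟶ Z) :
    (f ≫ g).1.2 = f.1.2 ≫ g.1.2 := rfl

variable (F p) in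
/-- The projection from the strict pullback to `D`. -/
def proj : CatPB F p ⥤ D where
  obj X := X.d
  map f := f.1.1

@[simp] lemma proj_obj (X : CatPB F p) : (proj F p).obj X = X.d := rfl
@[simp] lemma proj_map {X Y : CatPB F p} (f : X ⟶ Y) : (proj F p).map f = f.1.1 := rfl

lemma isULF_proj (hp : IsULF p) : IsULF (proj F p) := by
  intro X Y α B0 u v hfac
  simp only [proj_map] at hfac
  have hα := α.2
  have hfac' : p.map α.1.2 =
      (eqToHom X.h.symm ≫ F.map u) ≫ (F.map v ≫ eqToHom Y.h) := by
    have h2 : p.map α.1.2 = eqToHom X.h.symm ≫ F.map α.1.1 ≫ eqToHom Y.h := by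
      rw [hα]; simp
    rw [h2, hfac]; erw [F.map_comp]; simp
  obtain ⟨⟨Z, β, γ⟩, ⟨e, hβγ, hβ, hγ⟩, huniq⟩ := hp α.1.2 _ _ hfac'
  dsimp at e hβγ hβ hγ
  refine ⟨⟨⟨B0, Z, e.symm⟩, ⟨(u, β), ?_⟩, ⟨(v, γ), ?_⟩⟩, ⟨rfl, ?_, ?_, ?_⟩, ?_⟩
  · dsimp
    have hb2 : p.map β = eqToHom X.h.symm ≫ F.map u ≫ eqToHom e.symm := by
      rw [← Category.assoc, ← hβ]; simp
    rw [hb2]; simp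
  · dsimp
    rw [hγ]; simp
  · exact hom_ext (by simp [hfac]) (by simpa using hβγ)
  · exact Category.comp_id u
  · exact (Category.id_comp v).symm
  · rintro ⟨W, βW, γW⟩ ⟨eW, hcomp, hbw, hgw⟩
    obtain ⟨Wd, Wq, Wh⟩ := W
    dsimp at eW hcomp hbw hgw
    subst eW
    simp only [eqToHom_refl, Category.comp_id, Category.id_comp] at hbw hgw
    have hbw1 : βW.1.1 = u := hbw
    have hgw1 : γW.1.1 = v := hgw.trans (Category.id_comp _)
    have hq := huniq ⟨Wq, βW.1.2, γW.1.2⟩ ?_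
    · obtain ⟨hq1, hq2⟩ := Sigma.mk.inj_iff.mp hq
      subst hq1
      obtain ⟨hq2, hq3⟩ := Prod.mk_inj.mp (eq_of_heq hq2)
      refine Sigma.ext rfl (heq_of_eq ?_)
      exact Prod.ext (hom_ext hbw1 hq2) (hom_ext hgw1 hq3)
    · refine ⟨Wh.symm, ?_, ?_, ?_⟩
      · exact congrArg (fun m => m.1.2) hcomp
      · have := βW.2
        dsimp at this
        rw [hbw1] at this
        rw [this]; simp
      · have := γW.2
        dsimp at this
        rw [hgw1] at this
        erw [this]; simp

lemma isFinitary_proj (hfin : IsFinitary p) : IsFinitary (proj F p) := by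
  constructor
  · intro d
    apply Set.Finite.of_finite_image (f := fun X => X.q)
    · refine Set.Finite.subset (hfin.1 (F.obj d)) ?_
      rintro q ⟨X, hX, rfl⟩
      simp only [proj_obj, Set.mem_setOf_eq] at hX ⊢
      rw [← X.h, hX]
    · rintro X hX X' hX' hq
      simp only [proj_obj, Set.mem_setOf_eq] at hX hX'
      exact obj_ext (hX.trans hX'.symm) hq
  · intro dA dB w
    apply Set.Finite.of_finite_image
      (f := fun t => (⟨t.1.q, t.2.1.q, t.2.2.1.2⟩ : Σ (X : Q) (Y : Q), X ⟶ Y))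
    · refine Set.Finite.subset (hfin.2 (F.obj dA) (F.obj dB) (F.map w)) ?_
      rintro s ⟨⟨X, Y, f⟩, ⟨hX, hY, hw⟩, rfl⟩
      simp only [proj_obj, proj_map] at hX hY hw
      subst hX; subst hY
      refine ⟨X.h.symm, Y.h.symm, ?_⟩
      have hc := f.2
      rw [hw] at hc
      simp only [Functor.map_comp] at hc
      erw [eqToHom_map] at hc
      dsimp
      have h4 : p.map f.1.2 =
          eqToHom X.h.symm ≫ (eqToHom X.h ≫ p.map f.1.2 ≫ eqToHom Y.h.symm) ≫ eqToHom Y.h := by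
        simp
      rw [h4, ← hc]; erw [eqToHom_map]; simp
    · rintro ⟨⟨Xd, Xq, Xh⟩, ⟨Yd, Yq, Yh⟩, f⟩ ⟨hX, hY, hw⟩
        ⟨⟨Xd', Xq', Xh'⟩, ⟨Yd', Yq', Yh'⟩, f'⟩ ⟨hX', hY', hw'⟩ hg
      simp only [proj_obj, proj_map] at hX hY hw hX' hY' hw'
      dsimp at hg
      subst hX; subst hY; subst hX'; subst hY'
      obtain ⟨h1, hg⟩ := Sigma.mk.inj_iff.mp hg
      subst h1
      obtain ⟨h2, hg⟩ := Sigma.mk.inj_iff.mp (eq_of_heq hg)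
      subst h2
      have h3 := eq_of_heq hg
      simp only [eqToHom_refl, Category.comp_id, Category.id_comp] at hw hw'
      refine Sigma.ext rfl (heq_of_eq (Sigma.ext rfl (heq_of_eq ?_)))
      exact hom_ext (hw.trans hw'.symm) h3

end CatPB

end PB

/-- Regular languages of arrows are closed under inverse image along an arbitrary functor,
restricted to a hom-set. -/
theorem isRegularLang_preimage {C : Type u₁} [Category.{v₁} C] {D : Type u₂} [Category.{v₂} D]
    {A B : C} (L : Set (A ⟶ B)) (F : D ⥤ C) (R S : D)
    (hR : F.obj R = A) (hS : F.obj S = B)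
    (hL : IsRegularLang.{vq, uq} L) :
    IsRegularLang.{max v₂ vq, max u₂ uq}
      { α : R ⟶ S | eqToHom hR.symm ≫ F.map α ≫ eqToHom hS ∈ L } := by
  obtain ⟨Q, instQ, p, q₀, qf, h₀, hf, hULF, hFin, hLang⟩ := hL
  refine ⟨CatPB F p, inferInstance, CatPB.proj F p,
    ⟨R, q₀, hR.trans h₀.symm⟩, ⟨S, qf, hS.trans hf.symm⟩, rfl, rfl,
    CatPB.isULF_proj hULF, CatPB.isFinitary_proj hFin, ?_⟩
  ext α
  simp only [Set.mem_setOf_eq, hLang, CatPB.proj_obj, eqToHom_refl, Category.comp_id,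
    Category.id_comp, CatPB.proj_map]
  constructor
  · rintro ⟨g, hg⟩
    refine ⟨⟨(α, g), ?_⟩, by erw [eqToHom_refl, eqToHom_refl]; simp⟩
    dsimp
    rw [hg]; simp
  · rintro ⟨β, hβ⟩
    refine ⟨β.1.2, ?_⟩
    have hc := β.2
    dsimp at hc
    rw [hβ] at hc
    erw [eqToHom_refl, eqToHom_refl, Category.id_comp, Category.comp_id] at hc
    have : p.map β.1.2 =
        eqToHom (hR.trans h₀.symm).symm ≫ F.map α ≫ eqToHom (hS.trans hf.symm) := by
      rw [hc]; simp
    rw [this]; simp
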